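/- For each i ∈ [L], let M̃_i be the Metropolis–Hastings chain with symmetric Gaussian proposal q(x,y) = N(y; x, ηI) targeting the mixture density p̃_i(x) ∝ ∑_{j=1}^n w_j p̃_{(i,j)}(x), where p̃_{(i,j)} is the density of N(μ_j, β_i⁻¹Σ), and let M̃_{(i,j)} be the Metropolis–Hastings chain with the same proposal targeting p̃_{(i,j)}. Then for any measurable X⁰ ⊆ ℝ^d and any g_i ∈ L²(ℝ^d, p̃_i), ∑_{j=1}^n w_j Ẽ_{(i,j),X⁰}(g_i,g_i) ≤ Ẽ_{i,X⁰}(g_i,g_i), where Ẽ_{(i,j),X⁰} and Ẽ_{i,X⁰} are the X⁰-restricted Dirichlet forms of M̃_{(i,j)} and M̃_i respectively. -/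

import Mathlib

open MeasureTheory Matrix

noncomputable section

/-- Quadratic form `v ↦ vᵀ Σ⁻¹ v`. -/
def quadForm {d : ℕ} (Sig : Matrix (Fin d) (Fin d) ℝ) (v : Fin d → ℝ) : ℝ :=
  v ⬝ᵥ (Sig⁻¹ *ᵥ v)

/-- Density of the Gaussian distribution `N(μ, β⁻¹ Σ)` on `ℝ^d`. -/
def gaussDens {d : ℕ} (Sig : Matrix (Fin d) (Fin d) ℝ) (β : ℝ) (μ x : Fin d → ℝ) : ℝ :=
  (β / (2 * Real.pi)) ^ ((d : ℝ) / 2) / Real.sqrt Sig.det *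
    Real.exp (-(β / 2) * quadForm Sig (x - μ))

/-- Density of the symmetric Gaussian proposal `N(y; x, ηI)`. -/
def propDens (d : ℕ) (η : ℝ) (x y : Fin d → ℝ) : ℝ :=
  (2 * Real.pi * η) ^ (-(d : ℝ) / 2) * Real.exp (-(∑ k, (y k - x k) ^ 2) / (2 * η))

/-- `X⁰`-restricted Dirichlet form of the Metropolis–Hastings chain with symmetric
proposal `q` and target density `π`. -/
def mhRestDirichlet {d : ℕ} (η : ℝ) (π : (Fin d → ℝ) → ℝ) (X0 : Set (Fin d → ℝ))
    (g : (Fin d → ℝ) → ℝ) : ℝ :=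
  (1 / 2) * ∫ x in X0, ∫ y in X0, (g x - g y) ^ 2 * propDens d η x y * min (π x) (π y)

namespace Stmt10Aux

lemma propDens_pos {d : ℕ} {η : ℝ} (hη : 0 < η) (x y : Fin d → ℝ) : 0 < propDens d η x y := by
  unfold propDens
  positivity

lemma propDens_symm {d : ℕ} (η : ℝ) (x y : Fin d → ℝ) :
    propDens d η x y = propDens d η y x := by
  unfold propDens
  rw [show (∑ k, (y k - x k) ^ 2) = ∑ k, (x k - y k) ^ 2 from
    Finset.sum_congr rfl fun k _ => by ring]

lemma measurable_propDens_uncurry {d : ℕ} (η : ℝ) :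
    Measurable fun z : (Fin d → ℝ) × (Fin d → ℝ) => propDens d η z.1 z.2 := by
  unfold propDens; fun_prop

lemma measurable_propDens {d : ℕ} (η : ℝ) (x : Fin d → ℝ) :
    Measurable fun y : Fin d → ℝ => propDens d η x y := by
  unfold propDens; fun_prop

lemma measurable_gaussDens {d : ℕ} (Sig : Matrix (Fin d) (Fin d) ℝ) (β : ℝ) (μ : Fin d → ℝ) :
    Measurable (gaussDens Sig β μ) := by
  unfold gaussDens quadForm dotProduct Matrix.mulVec dotProduct
  apply Measurable.mul measurable_const
  apply Real.measurable_exp.comp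
  apply Measurable.const_mul
  apply Finset.measurable_sum
  intro k _
  apply Measurable.mul
  · exact (measurable_pi_apply k).sub measurable_const
  · exact Finset.measurable_sum _ fun l _ =>
      ((measurable_pi_apply l).sub measurable_const).const_mul _

lemma gaussDens_pos {d : ℕ} {Sig : Matrix (Fin d) (Fin d) ℝ} (hSig : Sig.PosDef)
    {β : ℝ} (hβ : 0 < β) (μ x : Fin d → ℝ) : 0 < gaussDens Sig β μ x := by
  unfold gaussDens
  have h1 : 0 < (β / (2 * Real.pi)) ^ ((d : ℝ) / 2) :=
    Real.rpow_pos_of_pos (by positivity) _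
  have h2 : 0 < Real.sqrt Sig.det := Real.sqrt_pos.mpr hSig.det_pos
  positivity

lemma mh_congr_ae {d : ℕ} (η : ℝ) (ρ : (Fin d → ℝ) → ℝ) (X0 : Set (Fin d → ℝ))
    {g g' : (Fin d → ℝ) → ℝ} (h : g =ᵐ[volume] g') :
    mhRestDirichlet η ρ X0 g = mhRestDirichlet η ρ X0 g' := by
  unfold mhRestDirichlet
  congr 1
  apply integral_congr_ae
  have hr : g =ᵐ[volume.restrict X0] g' := ae_restrict_of_ae h
  filter_upwards [hr] with x hx
  apply integral_congr_ae
  filter_upwards [hr] with y hy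
  rw [hx, hy]

/-- The Gaussian proposal has finite total (l)integral, uniformly in the start point. -/
lemma propDens_lintegral_lt_top {d : ℕ} {η : ℝ} (hη : 0 < η) :
    ∃ J : ENNReal, J < ⊤ ∧ ∀ x : Fin d → ℝ,
      ∫⁻ y, ENNReal.ofReal (propDens d η x y) = J := by
  refine ⟨∫⁻ y, ENNReal.ofReal (propDens d η 0 y), ?_, ?_⟩
  · have hfun : (fun y : Fin d → ℝ => propDens d η 0 y) =
        fun y => (2 * Real.pi * η) ^ (-(d : ℝ) / 2) *
          ∏ k, Real.exp (-(1 / (2 * η)) * (y k) ^ 2) := by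
      funext y
      unfold propDens
      rw [← Real.exp_sum]
      congr 1
      simp only [Pi.zero_apply, sub_zero]
      rw [← Finset.mul_sum]
      congr 1
      ring
    have hInt : Integrable (fun y : Fin d → ℝ => propDens d η 0 y) := by
      rw [hfun]
      exact (Integrable.fintype_prod fun _ =>
        integrable_exp_neg_mul_sq (by positivity)).const_mul _
    exact hInt.lintegral_lt_top
  · intro x
    have h := lintegral_add_right_eq_self (μ := volume)
      (fun y : Fin d → ℝ => ENNReal.ofReal (propDens d η x y)) x
    rw [← h]
    congr 1
    funext y
    congr 1
    unfold propDens
    simp only [Pi.add_apply, Pi.zero_apply, add_sub_cancel_right, sub_zero]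

end Stmt10Aux

set_option maxHeartbeats 2000000 in
theorem stmt10 (d L n : ℕ) (hn : 0 < n) (hL : 0 < L)
    (μ : Fin n → Fin d → ℝ)
    (Sig : Matrix (Fin d) (Fin d) ℝ) (hSig : Sig.PosDef)
    (w : Fin n → ℝ) (hw : ∀ j, 0 < w j) (hw1 : ∑ j, w j = 1)
    (β : Fin L → ℝ) (hβ : ∀ i, 0 < β i ∧ β i ≤ 1)
    (η : ℝ) (hη : 0 < η)
    (ptilde : Fin L → (Fin d → ℝ) → ℝ)
    (hptilde : ∀ i x, ptilde i x = ∑ j, w j * gaussDens Sig (β i) (μ j) x)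
    (X0 : Set (Fin d → ℝ)) (hX0 : MeasurableSet X0) :
    ∀ (i : Fin L) (g : (Fin d → ℝ) → ℝ),
      MemLp g 2 (volume.withDensity fun x => ENNReal.ofReal (ptilde i x)) →
      ∑ j, w j * mhRestDirichlet η (gaussDens Sig (β i) (μ j)) X0 g
        ≤ mhRestDirichlet η (ptilde i) X0 g := by
  intro i g hg
  open Stmt10Aux in
  -- notation
  set p : Fin n → (Fin d → ℝ) → ℝ := fun j => gaussDens Sig (β i) (μ j) with hp
  have hpm : ∀ j, Measurable (p j) := fun j => measurable_gaussDens Sig (β i) (μ j)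
  have hppos : ∀ j x, 0 < p j x := fun j x => gaussDens_pos hSig (hβ i).1 (μ j) x
  have hπm : Measurable (ptilde i) := by
    have : ptilde i = fun x => ∑ j, w j * p j x := funext (hptilde i)
    rw [this]
    exact Finset.measurable_sum _ fun j _ => ((hpm j).const_mul _)
  have hπpos : ∀ x, 0 < ptilde i x := by
    intro x
    rw [hptilde i x]
    exact Finset.sum_pos (fun j _ => mul_pos (hw j) (hppos j x)) ⟨⟨0, hn⟩, Finset.mem_univ _⟩
  -- measurable representative of g
  have hvac : (volume : Measure (Fin d → ℝ)) ≪
      volume.withDensity fun x => ENNReal.ofReal (ptilde i x) := by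
    refine withDensity_absolutelyContinuous' (by fun_prop) ?_
    exact Filter.Eventually.of_forall fun x => (ENNReal.ofReal_pos.mpr (hπpos x)).ne'
  have hgsm : AEStronglyMeasurable g volume := hg.1.mono_ac hvac
  obtain ⟨g', hg'm, hgg'⟩ : ∃ g' : (Fin d → ℝ) → ℝ, Measurable g' ∧ g =ᵐ[volume] g' :=
    ⟨hgsm.mk g, hgsm.stronglyMeasurable_mk.measurable, hgsm.ae_eq_mk⟩
  -- reduce to g'
  rw [mh_congr_ae η (ptilde i) X0 hgg']
  have hsum_congr : ∀ j : Fin n,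
      mhRestDirichlet η (p j) X0 g = mhRestDirichlet η (p j) X0 g' :=
    fun j => mh_congr_ae η (p j) X0 hgg'
  refine (Finset.sum_congr rfl fun j _ => (congrArg (w j * ·) (hsum_congr j) :
    w j * mhRestDirichlet η (p j) X0 g = w j * mhRestDirichlet η (p j) X0 g')).trans_le ?_
  -- the measure
  set ν : Measure (Fin d → ℝ) := volume.restrict X0 with hν
  set P : Measure ((Fin d → ℝ) × (Fin d → ℝ)) := ν.prod ν with hP
  -- the integrands
  set F : ((Fin d → ℝ) → ℝ) → ((Fin d → ℝ) × (Fin d → ℝ)) → ℝ :=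
    fun ρ z => (g' z.1 - g' z.2) ^ 2 * propDens d η z.1 z.2 * min (ρ z.1) (ρ z.2) with hF
  have hFmeas : ∀ ρ : (Fin d → ℝ) → ℝ, Measurable ρ → Measurable (F ρ) := by
    intro ρ hρ
    exact ((((hg'm.comp measurable_fst).sub (hg'm.comp measurable_snd)).pow measurable_const).mul
      (measurable_propDens_uncurry η)).mul
      ((hρ.comp measurable_fst).min (hρ.comp measurable_snd))
  have hFnonneg : ∀ (ρ : (Fin d → ℝ) → ℝ), (∀ x, 0 < ρ x) → ∀ z, 0 ≤ F ρ z := by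
    intro ρ hρ z
    have := propDens_pos hη z.1 z.2
    have h1 := hρ z.1
    have h2 := hρ z.2
    have : (0:ℝ) ≤ min (ρ z.1) (ρ z.2) := le_min h1.le h2.le
    positivity
  obtain ⟨J, hJtop, hJ⟩ := propDens_lintegral_lt_top (d := d) hη
  -- finiteness of the weighted L² norm
  have hmem' : MemLp g' 2 (volume.withDensity fun x => ENNReal.ofReal (ptilde i x)) :=
    MemLp.ae_eq ((withDensity_absolutelyContinuous volume _).ae_eq hgg') hg
  have hsq : Integrable (fun x => g' x ^ 2)
      (volume.withDensity fun x => ENNReal.ofReal (ptilde i x)) := hmem'.integrable_sq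
  set K : ENNReal := ∫⁻ x, ENNReal.ofReal (ptilde i x) * ENNReal.ofReal (g' x ^ 2) with hK
  have hKfin : K < ⊤ := by
    have h1 := hsq.lintegral_lt_top
    rwa [lintegral_withDensity_eq_lintegral_mul volume (by fun_prop)
      (show Measurable fun x => ENNReal.ofReal (g' x ^ 2) by fun_prop)] at h1
  -- the two bounding functions
  set A : (Fin d → ℝ) × (Fin d → ℝ) → ℝ :=
    fun z => 2 * g' z.1 ^ 2 * ptilde i z.1 * propDens d η z.1 z.2 with hA
  set B : (Fin d → ℝ) × (Fin d → ℝ) → ℝ :=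
    fun z => 2 * g' z.2 ^ 2 * ptilde i z.2 * propDens d η z.1 z.2 with hB
  have hAmeas : Measurable A :=
    ((measurable_const.mul ((hg'm.comp measurable_fst).pow measurable_const)).mul
      (hπm.comp measurable_fst)).mul (measurable_propDens_uncurry η)
  have hBmeas : Measurable B :=
    ((measurable_const.mul ((hg'm.comp measurable_snd).pow measurable_const)).mul
      (hπm.comp measurable_snd)).mul (measurable_propDens_uncurry η)
  have hone : ∀ x : Fin d → ℝ, (0:ℝ) ≤ 2 * g' x ^ 2 * ptilde i x :=
    fun x => by have := (hπpos x).le; positivity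
  have hofReal : ∀ x : Fin d → ℝ,
      ENNReal.ofReal (2 * g' x ^ 2 * ptilde i x)
        = 2 * (ENNReal.ofReal (ptilde i x) * ENNReal.ofReal (g' x ^ 2)) := by
    intro x
    rw [show (2:ℝ) * g' x ^ 2 * ptilde i x = 2 * (ptilde i x * g' x ^ 2) by ring,
      ENNReal.ofReal_mul (by norm_num), ENNReal.ofReal_mul (hπpos x).le]
    norm_num
  have hlim : ∫⁻ x, ENNReal.ofReal (2 * g' x ^ 2 * ptilde i x) ∂ν ≤ 2 * K := by
    refine le_trans (lintegral_mono' Measure.restrict_le_self le_rfl) ?_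
    simp only [hofReal]
    rw [lintegral_const_mul _ (by fun_prop)]
  have hprop_nu : ∀ x : Fin d → ℝ, ∫⁻ y, ENNReal.ofReal (propDens d η x y) ∂ν ≤ J :=
    fun x => le_trans (lintegral_mono' Measure.restrict_le_self le_rfl) (hJ x).le
  have hAint : Integrable A P := by
    refine ⟨hAmeas.aestronglyMeasurable, ?_⟩
    have hA0 : (0 : ((Fin d → ℝ) × (Fin d → ℝ)) → ℝ) ≤ᵐ[P] A :=
      Filter.Eventually.of_forall fun z =>
        mul_nonneg (hone z.1) (propDens_pos hη z.1 z.2).le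
    rw [hasFiniteIntegral_iff_ofReal hA0]
    calc ∫⁻ z, ENNReal.ofReal (A z) ∂P
        = ∫⁻ x, ∫⁻ y, ENNReal.ofReal (A (x, y)) ∂ν ∂ν :=
          lintegral_prod _ (ENNReal.measurable_ofReal.comp hAmeas).aemeasurable
      _ ≤ ∫⁻ x, ENNReal.ofReal (2 * g' x ^ 2 * ptilde i x) * J ∂ν := by
          refine lintegral_mono fun x => ?_
          have hxy : ∀ y : Fin d → ℝ, ENNReal.ofReal (A (x, y))
              = ENNReal.ofReal (2 * g' x ^ 2 * ptilde i x)
                * ENNReal.ofReal (propDens d η x y) :=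
            fun y => ENNReal.ofReal_mul (hone x)
          simp only [hxy]
          rw [lintegral_const_mul _ (measurable_propDens η x).ennreal_ofReal]
          exact mul_le_mul_right (hprop_nu x) _
      _ = (∫⁻ x, ENNReal.ofReal (2 * g' x ^ 2 * ptilde i x) ∂ν) * J :=
          lintegral_mul_const _ (by fun_prop)
      _ ≤ 2 * K * J := mul_le_mul_left hlim _
      _ < ⊤ := ENNReal.mul_lt_top (ENNReal.mul_lt_top (by norm_num) hKfin) hJtop
  have hBint : Integrable B P := by
    refine ⟨hBmeas.aestronglyMeasurable, ?_⟩
    have hB0 : (0 : ((Fin d → ℝ) × (Fin d → ℝ)) → ℝ) ≤ᵐ[P] B :=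
      Filter.Eventually.of_forall fun z =>
        mul_nonneg (hone z.2) (propDens_pos hη z.1 z.2).le
    rw [hasFiniteIntegral_iff_ofReal hB0]
    calc ∫⁻ z, ENNReal.ofReal (B z) ∂P
        = ∫⁻ y, ∫⁻ x, ENNReal.ofReal (B (x, y)) ∂ν ∂ν :=
          lintegral_prod_symm _ (ENNReal.measurable_ofReal.comp hBmeas).aemeasurable
      _ ≤ ∫⁻ y, ENNReal.ofReal (2 * g' y ^ 2 * ptilde i y) * J ∂ν := by
          refine lintegral_mono fun y => ?_
          have hxy : ∀ x : Fin d → ℝ, ENNReal.ofReal (B (x, y))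
              = ENNReal.ofReal (2 * g' y ^ 2 * ptilde i y)
                * ENNReal.ofReal (propDens d η y x) := by
            intro x
            rw [show B (x, y) = 2 * g' y ^ 2 * ptilde i y * propDens d η y x by
              simp only [hB]; rw [propDens_symm]]
            exact ENNReal.ofReal_mul (hone y)
          simp only [hxy]
          rw [lintegral_const_mul _ (measurable_propDens η y).ennreal_ofReal]
          exact mul_le_mul_right (hprop_nu y) _
      _ = (∫⁻ y, ENNReal.ofReal (2 * g' y ^ 2 * ptilde i y) ∂ν) * J :=
          lintegral_mul_const _ (by fun_prop)
      _ ≤ 2 * K * J := mul_le_mul_left hlim _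
      _ < ⊤ := ENNReal.mul_lt_top (ENNReal.mul_lt_top (by norm_num) hKfin) hJtop
  -- integrability of the main integrand
  have hFπint : Integrable (F (ptilde i)) P := by
    refine (hAint.add hBint).mono' (hFmeas _ hπm).aestronglyMeasurable
      (Filter.Eventually.of_forall fun z => ?_)
    rw [Real.norm_of_nonneg (hFnonneg _ hπpos z)]
    simp only [hF, hA, hB, Pi.add_apply]
    set a := g' z.1
    set b := g' z.2
    set q := propDens d η z.1 z.2
    set m := min (ptilde i z.1) (ptilde i z.2)
    have hq : (0:ℝ) ≤ q := (propDens_pos hη z.1 z.2).le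
    have hm0 : (0:ℝ) ≤ m := le_min (hπpos z.1).le (hπpos z.2).le
    have hm1 : m ≤ ptilde i z.1 := min_le_left _ _
    have hm2 : m ≤ ptilde i z.2 := min_le_right _ _
    have h1 : (a - b) ^ 2 * q * m ≤ (2 * a ^ 2 + 2 * b ^ 2) * q * m := by
      refine mul_le_mul_of_nonneg_right (mul_le_mul_of_nonneg_right ?_ hq) hm0
      nlinarith [sq_nonneg (a + b)]
    have h2 : 2 * a ^ 2 * (q * m) ≤ 2 * a ^ 2 * (q * ptilde i z.1) :=
      mul_le_mul_of_nonneg_left (mul_le_mul_of_nonneg_left hm1 hq) (by positivity)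
    have h3 : 2 * b ^ 2 * (q * m) ≤ 2 * b ^ 2 * (q * ptilde i z.2) :=
      mul_le_mul_of_nonneg_left (mul_le_mul_of_nonneg_left hm2 hq) (by positivity)
    nlinarith [h1, h2, h3]
  -- the pointwise inequality
  have hsumF : ∀ z, ∑ j, w j * F (p j) z ≤ F (ptilde i) z := by
    intro z
    have hc : (0:ℝ) ≤ (g' z.1 - g' z.2) ^ 2 * propDens d η z.1 z.2 := by
      have := (propDens_pos hη z.1 z.2).le
      positivity
    have hmin : ∑ j, w j * min (p j z.1) (p j z.2)
        ≤ min (ptilde i z.1) (ptilde i z.2) := by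
      refine le_min ?_ ?_
      · calc ∑ j, w j * min (p j z.1) (p j z.2) ≤ ∑ j, w j * p j z.1 :=
              Finset.sum_le_sum fun j _ =>
                mul_le_mul_of_nonneg_left (min_le_left _ _) (hw j).le
          _ = ptilde i z.1 := (hptilde i z.1).symm
      · calc ∑ j, w j * min (p j z.1) (p j z.2) ≤ ∑ j, w j * p j z.2 :=
              Finset.sum_le_sum fun j _ =>
                mul_le_mul_of_nonneg_left (min_le_right _ _) (hw j).le
          _ = ptilde i z.2 := (hptilde i z.2).symm
    calc ∑ j, w j * F (p j) z
        = ((g' z.1 - g' z.2) ^ 2 * propDens d η z.1 z.2)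
            * ∑ j, w j * min (p j z.1) (p j z.2) := by
          rw [Finset.mul_sum]
          exact Finset.sum_congr rfl fun j _ => by simp only [hF]; ring
      _ ≤ ((g' z.1 - g' z.2) ^ 2 * propDens d η z.1 z.2)
            * min (ptilde i z.1) (ptilde i z.2) := mul_le_mul_of_nonneg_left hmin hc
      _ = F (ptilde i) z := rfl
  have hwj_le : ∀ (j : Fin n) z, w j * F (p j) z ≤ F (ptilde i) z := fun j z =>
    le_trans (Finset.single_le_sum (f := fun k => w k * F (p k) z)
      (fun k _ => mul_nonneg (hw k).le (hFnonneg _ (hppos k) z)) (Finset.mem_univ j))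
      (hsumF z)
  have hIntwj : ∀ j, Integrable (fun z => w j * F (p j) z) P := fun j =>
    hFπint.mono' (((hFmeas _ (hpm j)).const_mul _)).aestronglyMeasurable
      (Filter.Eventually.of_forall fun z => by
        rw [Real.norm_of_nonneg (mul_nonneg (hw j).le (hFnonneg _ (hppos j) z))]
        exact hwj_le j z)
  have hIntj : ∀ j, Integrable (F (p j)) P := by
    intro j
    have h2 := (hIntwj j).const_mul (w j)⁻¹
    simpa [← mul_assoc, inv_mul_cancel₀ (hw j).ne'] using h2
  -- Fubini representation
  have hrepr : ∀ ρ : (Fin d → ℝ) → ℝ, Integrable (F ρ) P →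
      mhRestDirichlet η ρ X0 g' = (1 / 2) * ∫ z, F ρ z ∂P := by
    intro ρ h
    unfold mhRestDirichlet
    congr 1
    exact integral_integral h
  calc ∑ j, w j * mhRestDirichlet η (p j) X0 g'
      = ∑ j, (1 / 2 : ℝ) * ∫ z, w j * F (p j) z ∂P := by
        refine Finset.sum_congr rfl fun j _ => ?_
        rw [hrepr (p j) (hIntj j), integral_const_mul]
        ring
    _ = (1 / 2) * ∫ z, ∑ j, w j * F (p j) z ∂P := by
        rw [← Finset.mul_sum, ← integral_finset_sum _ fun j _ => hIntwj j]
    _ ≤ (1 / 2) * ∫ z, F (ptilde i) z ∂P := by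
        refine mul_le_mul_of_nonneg_left ?_ (by norm_num)
        exact integral_mono (integrable_finset_sum _ fun j _ => hIntwj j) hFπint
          fun z => hsumF z
    _ = mhRestDirichlet η (ptilde i) X0 g' := (hrepr _ hFπint).symm

end
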